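/- Let I_n = {(k,l) ∈ M_n : 1 ≤ l ≤ n} be the interior of the mesh poset and T_n = {(k,l) ∈ ℤ × ℤ : 1 ≤ l ≤ n and 0 ≤ k ≤ n−l}. Then every orbit of the action of the cyclic group generated by f on I_n contains exactly one element of T_n; consequently, f has exactly n(n+1)/2 orbits on I_n (matching the number of suspension orbits in the Auslander–Reiten quiver of an A_n-quiver). -/

import Mathlib

/-- The mesh poset `M_n`: pairs `(k,l)` of integers with `0 ≤ l ≤ n+1`. -/
def Mesh (n : ℕ) : Type := {p : ℤ × ℤ // 0 ≤ p.2 ∧ p.2 ≤ (n : ℤ) + 1}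

/-- The partial order: `(k,l) ≤ (k',l')` iff `k ≤ k'` and `k + l ≤ k' + l'`. -/
instance (n : ℕ) : PartialOrder (Mesh n) where
  le p q := p.1.1 ≤ q.1.1 ∧ p.1.1 + p.1.2 ≤ q.1.1 + q.1.2
  le_refl p := ⟨le_refl _, le_refl _⟩
  le_trans p q r hpq hqr := ⟨hpq.1.trans hqr.1, hpq.2.trans hqr.2⟩
  le_antisymm := by
    rintro ⟨⟨pk, pl⟩, hp⟩ ⟨⟨qk, ql⟩, hq⟩ ⟨h1, h2⟩ ⟨h3, h4⟩
    dsimp only at h1 h2 h3 h4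
    have hk : pk = qk := le_antisymm h1 h3
    have hl : pl = ql := by omega
    subst hk; subst hl; rfl

/-- The flip symmetry `f(k,l) = (k+l, n+1-l)`. -/
def meshF (n : ℕ) (p : Mesh n) : Mesh n :=
  ⟨(p.1.1 + p.1.2, (n : ℤ) + 1 - p.1.2), by obtain ⟨h1, h2⟩ := p.2; constructor <;> omega⟩

/-- The translation `t(k,l) = (k-1, l)`. -/
def meshT (n : ℕ) (p : Mesh n) : Mesh n := ⟨(p.1.1 - 1, p.1.2), p.2⟩


/-- The flip `f` as a permutation of `M_n`. -/
def meshFEquiv (n : ℕ) : Equiv.Perm (Mesh n) where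
  toFun := meshF n
  invFun p := ⟨(p.1.1 + p.1.2 - ((n : ℤ) + 1), (n : ℤ) + 1 - p.1.2), by
    obtain ⟨h1, h2⟩ := p.2; constructor <;> omega⟩
  left_inv p := by
    obtain ⟨⟨pk, pl⟩, hp⟩ := p
    apply Subtype.ext
    simp only [meshF]
    apply Prod.ext <;> dsimp <;> ring
  right_inv p := by
    obtain ⟨⟨pk, pl⟩, hp⟩ := p
    apply Subtype.ext
    simp only [meshF]
    apply Prod.ext <;> dsimp <;> ring

/-- The translation `t` as a permutation of `M_n`. -/
def meshTEquiv (n : ℕ) : Equiv.Perm (Mesh n) where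
  toFun := meshT n
  invFun p := ⟨(p.1.1 + 1, p.1.2), p.2⟩
  left_inv p := by
    apply Subtype.ext
    simp only [meshT]
    apply Prod.ext <;> dsimp <;> ring
  right_inv p := by
    apply Subtype.ext
    simp only [meshT]
    apply Prod.ext <;> dsimp <;> ring

/-- The orbit equivalence relation of the cyclic group generated by `f` on the
interior `I_n = {(k,l) ∈ M_n : 1 ≤ l ≤ n}` of the mesh poset. -/
def meshOrbitSetoid (n : ℕ) : Setoid {p : Mesh n // 1 ≤ p.1.2 ∧ p.1.2 ≤ (n : ℤ)} where
  r p q := ∃ m : ℤ, (meshFEquiv n ^ m) p.1 = q.1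
  iseqv := by
    refine ⟨fun p => ⟨0, by simp⟩, ?_, ?_⟩
    · rintro p q ⟨m, hm⟩
      refine ⟨-m, ?_⟩
      rw [← hm, ← Equiv.Perm.mul_apply, ← zpow_add]
      simp
    · rintro p q r ⟨m, hm⟩ ⟨m', hm'⟩
      refine ⟨m' + m, ?_⟩
      rw [← hm', ← hm, ← Equiv.Perm.mul_apply, ← zpow_add]

def meshShift (n : ℕ) : Equiv.Perm (Mesh n) where
  toFun p := ⟨(p.1.1 + ((n:ℤ)+1), p.1.2), p.2⟩
  invFun p := ⟨(p.1.1 - ((n:ℤ)+1), p.1.2), p.2⟩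
  left_inv p := by apply Subtype.ext; apply Prod.ext <;> dsimp <;> ring
  right_inv p := by apply Subtype.ext; apply Prod.ext <;> dsimp <;> ring

lemma meshF_sq (n : ℕ) : meshFEquiv n * meshFEquiv n = meshShift n := by
  apply Equiv.ext; intro p
  apply Subtype.ext
  simp only [Equiv.Perm.mul_apply, meshFEquiv, meshShift, meshF, Equiv.coe_fn_mk]
  show ((meshF n (meshF n p)).1 : ℤ × ℤ) = (p.1.1 + ((n:ℤ)+1), p.1.2)
  apply Prod.ext <;> simp [meshF] <;> ring

lemma meshShift_zpow (n : ℕ) (m : ℤ) (p : Mesh n) :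
    ((meshShift n ^ m) p).1 = (p.1.1 + m * ((n:ℤ)+1), p.1.2) := by
  induction m using Int.induction_on with
  | zero => simp
  | succ a ih =>
      rw [show (a:ℤ) + 1 = 1 + a by ring, zpow_add, zpow_one, Equiv.Perm.mul_apply]
      have h : (((meshShift n) ((meshShift n ^ (a:ℤ)) p)).1 : ℤ × ℤ) =
          (((meshShift n ^ (a:ℤ)) p).1.1 + ((n:ℤ)+1), ((meshShift n ^ (a:ℤ)) p).1.2) := rfl
      rw [h, ih]
      apply Prod.ext <;> dsimp <;> ring
  | pred a ih =>
      rw [show (-(a:ℤ) - 1) = -1 + -a by ring, zpow_add, Equiv.Perm.mul_apply]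
      have h : (((meshShift n ^ (-1:ℤ)) ((meshShift n ^ (-(a:ℤ))) p)).1 : ℤ × ℤ) =
          (((meshShift n ^ (-(a:ℤ))) p).1.1 - ((n:ℤ)+1), ((meshShift n ^ (-(a:ℤ))) p).1.2) := rfl
      rw [h, ih]
      apply Prod.ext <;> dsimp <;> ring

lemma meshF_even (n : ℕ) (a : ℤ) (p : Mesh n) :
    ((meshFEquiv n ^ (2*a)) p).1 = (p.1.1 + a * ((n:ℤ)+1), p.1.2) := by
  rw [zpow_mul,
    show (meshFEquiv n ^ (2:ℤ)) = meshShift n by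
      rw [show (2:ℤ) = 1+1 by ring, zpow_add, zpow_one, meshF_sq],
    meshShift_zpow]

lemma meshF_odd (n : ℕ) (a : ℤ) (p : Mesh n) :
    ((meshFEquiv n ^ (2*a+1)) p).1
      = (p.1.1 + p.1.2 + a * ((n:ℤ)+1), (n:ℤ)+1 - p.1.2) := by
  rw [zpow_add, zpow_one, Equiv.Perm.mul_apply, meshF_even]
  have h : ((meshFEquiv n p).1 : ℤ × ℤ) = (p.1.1 + p.1.2, (n:ℤ)+1 - p.1.2) := rfl
  rw [h]

lemma orbit_char (n : ℕ) (p q : Mesh n) :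
    (∃ m : ℤ, (meshFEquiv n ^ m) p = q) ↔
      ∃ a : ℤ, q.1 = (p.1.1 + a * ((n:ℤ)+1), p.1.2) ∨
        q.1 = (p.1.1 + p.1.2 + a * ((n:ℤ)+1), (n:ℤ)+1 - p.1.2) := by
  constructor
  · rintro ⟨m, rfl⟩
    obtain ⟨a, h | h⟩ : ∃ a, m = 2*a ∨ m = 2*a+1 := ⟨m/2, by omega⟩ <;> subst h
    · exact ⟨a, Or.inl (meshF_even n a p)⟩
    · exact ⟨a, Or.inr (meshF_odd n a p)⟩
  · rintro ⟨a, h | h⟩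
    · exact ⟨2*a, Subtype.ext (by rw [meshF_even, h])⟩
    · exact ⟨2*a+1, Subtype.ext (by rw [meshF_odd, h])⟩

lemma mult_bound (a N : ℤ) (hN : 0 < N) (h1 : -N < a*N) (h2 : a*N < N) : a = 0 := by
  rcases lt_trichotomy a 0 with h | h | h
  · have : a * N ≤ -1 * N := mul_le_mul_of_nonneg_right (by omega) hN.le
    omega
  · exact h
  · have : 1 * N ≤ a * N := mul_le_mul_of_nonneg_right (by omega) hN.le
    omega

lemma unique_in_T (n : ℕ) (q q' : Mesh n)
    (hq : 1 ≤ q.1.2 ∧ q.1.2 ≤ (n:ℤ) ∧ 0 ≤ q.1.1 ∧ q.1.1 ≤ (n:ℤ) - q.1.2)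
    (hq' : 1 ≤ q'.1.2 ∧ q'.1.2 ≤ (n:ℤ) ∧ 0 ≤ q'.1.1 ∧ q'.1.1 ≤ (n:ℤ) - q'.1.2)
    (h : ∃ m : ℤ, (meshFEquiv n ^ m) q = q') : q = q' := by
  rw [orbit_char] at h
  obtain ⟨hl1, hl2, hk1, hk2⟩ := hq
  obtain ⟨hl1', hl2', hk1', hk2'⟩ := hq'
  obtain ⟨a, h | h⟩ := h
  · have e1 : q'.1.1 = q.1.1 + a * ((n:ℤ)+1) := by rw [h]
    have e2 : q'.1.2 = q.1.2 := by rw [h]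
    have ha : a = 0 := mult_bound a ((n:ℤ)+1) (by omega) (by omega) (by omega)
    subst ha
    simp only [zero_mul, add_zero] at e1
    apply Subtype.ext
    apply Prod.ext <;> omega
  · have e1 : q'.1.1 = q.1.1 + q.1.2 + a * ((n:ℤ)+1) := by rw [h]
    have e2 : q'.1.2 = (n:ℤ)+1 - q.1.2 := by rw [h]
    have ha : a = 0 := mult_bound a ((n:ℤ)+1) (by omega) (by omega) (by omega)
    subst ha
    simp only [zero_mul, add_zero] at e1
    omega

lemma exists_shift (n : ℕ) (p q q' : Mesh n) (h1 : ∃ m : ℤ, (meshFEquiv n ^ m) p = q)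
    (h2 : ∃ m : ℤ, (meshFEquiv n ^ m) p = q') : ∃ m : ℤ, (meshFEquiv n ^ m) q = q' := by
  obtain ⟨m1, rfl⟩ := h1
  obtain ⟨m2, rfl⟩ := h2
  exact ⟨m2 - m1, by rw [← Equiv.Perm.mul_apply, ← zpow_add, sub_add_cancel]⟩

lemma mesh_exists_unique (n : ℕ) (hn : 1 ≤ n) :
    ∀ p : Mesh n, 1 ≤ p.1.2 → p.1.2 ≤ (n : ℤ) →
      ∃! q : Mesh n,
        (1 ≤ q.1.2 ∧ q.1.2 ≤ (n : ℤ) ∧ 0 ≤ q.1.1 ∧ q.1.1 ≤ (n : ℤ) - q.1.2) ∧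
        ∃ m : ℤ, (meshFEquiv n ^ m) p = q := by
  intro p hl1 hl2
  obtain ⟨r, d, hr0, hrN, hpk⟩ :
      ∃ r d : ℤ, 0 ≤ r ∧ r < (n:ℤ)+1 ∧ p.1.1 = d * ((n:ℤ)+1) + r := by
    refine ⟨p.1.1 % ((n:ℤ)+1), p.1.1 / ((n:ℤ)+1),
      Int.emod_nonneg _ (by omega), Int.emod_lt_of_pos _ (by omega), ?_⟩
    have h := Int.mul_ediv_add_emod p.1.1 ((n:ℤ)+1)
    linarith [mul_comm ((n:ℤ)+1) (p.1.1 / ((n:ℤ)+1))]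
  by_cases hc : r ≤ (n:ℤ) - p.1.2
  · have horb : (meshFEquiv n ^ (2 * (-d))) p =
        (⟨(r, p.1.2), by constructor <;> omega⟩ : Mesh n) := by
      apply Subtype.ext
      rw [meshF_even]
      apply Prod.ext <;> dsimp
      · linear_combination hpk
    refine ⟨⟨(r, p.1.2), by constructor <;> omega⟩,
      ⟨⟨hl1, hl2, hr0, hc⟩, ⟨2 * (-d), horb⟩⟩, fun q' hq' => ?_⟩
    exact unique_in_T n q' _ hq'.1 ⟨hl1, hl2, hr0, hc⟩
      (exists_shift n p q' _ hq'.2 ⟨2 * (-d), horb⟩)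
  · have horb : (meshFEquiv n ^ (2 * (-d-1) + 1)) p =
        (⟨(r + p.1.2 - ((n:ℤ)+1), (n:ℤ)+1 - p.1.2), by constructor <;> omega⟩ : Mesh n) := by
      apply Subtype.ext
      rw [meshF_odd]
      apply Prod.ext <;> dsimp
      · linear_combination hpk
    have hT : 1 ≤ ((⟨(r + p.1.2 - ((n:ℤ)+1), (n:ℤ)+1 - p.1.2), by constructor <;> omega⟩ : Mesh n) : Mesh n).1.2 ∧
        ((⟨(r + p.1.2 - ((n:ℤ)+1), (n:ℤ)+1 - p.1.2), by constructor <;> omega⟩ : Mesh n)).1.2 ≤ (n:ℤ) ∧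
        0 ≤ ((⟨(r + p.1.2 - ((n:ℤ)+1), (n:ℤ)+1 - p.1.2), by constructor <;> omega⟩ : Mesh n)).1.1 ∧
        ((⟨(r + p.1.2 - ((n:ℤ)+1), (n:ℤ)+1 - p.1.2), by constructor <;> omega⟩ : Mesh n)).1.1 ≤
          (n:ℤ) - ((⟨(r + p.1.2 - ((n:ℤ)+1), (n:ℤ)+1 - p.1.2), by constructor <;> omega⟩ : Mesh n)).1.2 := by
      refine ⟨?_, ?_, ?_, ?_⟩
      · show (1:ℤ) ≤ (n:ℤ)+1 - p.1.2; omega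
      · show (n:ℤ)+1 - p.1.2 ≤ (n:ℤ); omega
      · show (0:ℤ) ≤ r + p.1.2 - ((n:ℤ)+1); omega
      · show r + p.1.2 - ((n:ℤ)+1) ≤ (n:ℤ) - ((n:ℤ)+1 - p.1.2); omega
    refine ⟨⟨(r + p.1.2 - ((n:ℤ)+1), (n:ℤ)+1 - p.1.2), by constructor <;> omega⟩,
      ⟨hT, ⟨2 * (-d-1) + 1, horb⟩⟩, fun q' hq' => ?_⟩
    exact unique_in_T n q' _ hq'.1 hT
      (exists_shift n p q' _ hq'.2 ⟨2 * (-d-1) + 1, horb⟩)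

lemma mesh_card (n : ℕ) (hn : 1 ≤ n) :
    Nat.card (Quotient (meshOrbitSetoid n)) = n * (n + 1) / 2 := by
  have hmain := mesh_exists_unique n hn
  -- the fundamental domain as a type
  let T := {q : Mesh n // 1 ≤ q.1.2 ∧ q.1.2 ≤ (n:ℤ) ∧ 0 ≤ q.1.1 ∧ q.1.1 ≤ (n:ℤ) - q.1.2}
  have e1 : T ≃ Quotient (meshOrbitSetoid n) := by
    refine Equiv.ofBijective
      (fun q => Quotient.mk (meshOrbitSetoid n) ⟨q.1, q.2.1, q.2.2.1⟩) ⟨?_, ?_⟩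
    · intro q q' h
      have h' := Quotient.exact h
      obtain ⟨m, hm⟩ := h'
      exact Subtype.ext (unique_in_T n q.1 q'.1 q.2 q'.2 ⟨m, hm⟩)
    · intro x
      induction x using Quotient.ind with
      | _ p =>
        obtain ⟨q, ⟨hqT, ⟨m, hm⟩⟩, _⟩ := hmain p.1 p.2.1 p.2.2
        refine ⟨⟨q, hqT⟩, ?_⟩
        apply Quotient.sound
        refine ⟨-m, ?_⟩
        show (meshFEquiv n ^ (-m)) q = p.1
        rw [← hm, ← Equiv.Perm.mul_apply, ← zpow_add]
        simp
  have e2 : T ≃ {x : Fin n × Fin n // x.1 ≤ x.2} := by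
    refine ⟨fun q => ⟨(⟨q.1.1.1.toNat, ?_⟩, ⟨((n:ℤ) - q.1.1.2).toNat, ?_⟩), ?_⟩,
      fun x => ⟨⟨((x.1.1.1 : ℤ), (n:ℤ) - (x.1.2.1 : ℤ)), ?_⟩, ?_⟩, ?_, ?_⟩
    · obtain ⟨hl1, hl2, hk1, hk2⟩ := q.2; omega
    · obtain ⟨hl1, hl2, hk1, hk2⟩ := q.2; omega
    · obtain ⟨hl1, hl2, hk1, hk2⟩ := q.2
      show q.1.1.1.toNat ≤ ((n:ℤ) - q.1.1.2).toNat
      omega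
    · have h1 := x.1.1.isLt
      have h2 := x.1.2.isLt
      constructor <;> dsimp <;> omega
    · have h1 := x.1.1.isLt
      have h2 := x.1.2.isLt
      have h3 : (x.1.1 : ℕ) ≤ (x.1.2 : ℕ) := x.2
      refine ⟨by dsimp; omega, by dsimp; omega, by dsimp; omega, by dsimp; omega⟩
    · intro q
      obtain ⟨hl1, hl2, hk1, hk2⟩ := q.2
      apply Subtype.ext
      apply Subtype.ext
      apply Prod.ext <;> dsimp <;> omega
    · intro x
      have h1 := x.1.1.isLt
      have h2 := x.1.2.isLt
      apply Subtype.ext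
      apply Prod.ext <;> apply Fin.ext <;> dsimp <;> omega
  rw [← Nat.card_congr e1, Nat.card_congr e2, Nat.card_congr (Sym2.sortEquiv (α := Fin n)).symm,
    Nat.card_eq_fintype_card, Sym2.card, Fintype.card_fin, Nat.choose_two_right,
    Nat.add_sub_cancel, Nat.mul_comm]

/-- every `⟨f⟩`-orbit on the interior `I_n` contains exactly one element of
the fundamental domain `T_n = {(k,l) : 1 ≤ l ≤ n, 0 ≤ k ≤ n - l}`; consequently `f` has
exactly `n(n+1)/2` orbits on `I_n`. -/
theorem mesh_f_orbits (n : ℕ) (hn : 1 ≤ n) :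
    (∀ p : Mesh n, 1 ≤ p.1.2 → p.1.2 ≤ (n : ℤ) →
      ∃! q : Mesh n,
        (1 ≤ q.1.2 ∧ q.1.2 ≤ (n : ℤ) ∧ 0 ≤ q.1.1 ∧ q.1.1 ≤ (n : ℤ) - q.1.2) ∧
        ∃ m : ℤ, (meshFEquiv n ^ m) p = q) ∧
    Nat.card (Quotient (meshOrbitSetoid n)) = n * (n + 1) / 2 :=
  ⟨mesh_exists_unique n hn, mesh_card n hn⟩
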